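/- Let V be a finite-dimensional real normed space with unit sphere S, and A ∈ End(V) an endomorphism all of whose complex eigenvalues are real. Then for every v ∈ S, the limit lim_{t→∞} e^{tA}v / ‖e^{tA}v‖ exists in S and is a fixed point of the flow x ↦ e^{tA}x/‖e^{tA}x‖ for all t ∈ ℝ. -/

import Mathlib

open Filter

section Aux

open Polynomial Nat

variable {V : Type*} [NormedAddCommGroup V] [NormedSpace ℝ V]

private noncomputable def clmAlgHom (V : Type*) [NormedAddCommGroup V] [NormedSpace ℝ V] :
    (V →L[ℝ] V) →ₐ[ℝ] Module.End ℝ V where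
  toFun B := B
  map_one' := rfl
  map_mul' _ _ := rfl
  map_zero' := rfl
  map_add' _ _ := rfl
  commutes' r := by ext x; simp [Algebra.algebraMap_eq_smul_one]

private lemma aeval_clm_apply [FiniteDimensional ℝ V] (A : V →L[ℝ] V) (p : ℝ[X]) (x : V) :
    (Polynomial.aeval A p) x = (Polynomial.aeval (A : V →ₗ[ℝ] V) p) x := by
  have h := Polynomial.aeval_algHom_apply (clmAlgHom V) A p
  exact congrFun (congrArg DFunLike.coe h.symm) x

private lemma aeval_charpoly_clm [FiniteDimensional ℝ V] (A : V →L[ℝ] V) (x : V) :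
    (Polynomial.aeval A (LinearMap.charpoly (A : V →ₗ[ℝ] V))) x = 0 := by
  rw [aeval_clm_apply, LinearMap.aeval_self_charpoly]; rfl

private lemma aeval_x_sub_c_pow (A : V →L[ℝ] V) (μ : ℝ) (n : ℕ) :
    Polynomial.aeval A ((X - C μ) ^ n) = (A - μ • (1 : V →L[ℝ] V)) ^ n := by
  rw [map_pow, map_sub, aeval_X, aeval_C, Algebra.algebraMap_eq_smul_one]

private lemma decomp_aux (A : V →L[ℝ] V) (n : ℕ) (s : Finset ℝ) (v : V)
    (h : Polynomial.aeval A (∏ μ ∈ s, (X - C μ) ^ n) v = 0) :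
    ∃ c : ℝ →₀ V, ↑c.support ⊆ (s : Set ℝ) ∧
      (∀ μ : ℝ, ((A - μ • (1 : V →L[ℝ] V)) ^ n) (c μ) = 0) ∧
      c.sum (fun _ x => x) = v := by
  classical
  induction s using Finset.induction_on generalizing v with
  | empty =>
    have hv0 : v = 0 := by simpa using h
    exact ⟨0, by simp, fun μ => by rw [Finsupp.coe_zero, Pi.zero_apply, map_zero], by simp [hv0]⟩
  | @insert μ s hμs ih =>
    rw [Finset.prod_insert hμs] at h
    set p : ℝ[X] := (X - C μ) ^ n with hp
    set q : ℝ[X] := ∏ ν ∈ s, (X - C ν) ^ n with hq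
    have hcop : IsCoprime p q := by
      refine IsCoprime.pow_left ?_
      refine IsCoprime.prod_right fun ν hν => ?_
      refine IsCoprime.pow_right ?_
      exact Polynomial.isCoprime_X_sub_C_of_isUnit_sub
        (by
          have hne : μ ≠ ν := fun e => hμs (e ▸ hν)
          simpa using (sub_ne_zero_of_ne hne).isUnit)
    obtain ⟨a, b, hab⟩ := hcop
    have hv : v = Polynomial.aeval A (b * q) v + Polynomial.aeval A (a * p) v := by
      have := congrArg (fun P => Polynomial.aeval A P v) hab
      simp only [map_add, map_one, ContinuousLinearMap.add_apply,
        ContinuousLinearMap.one_apply] at this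
      rw [add_comm] at this; exact this.symm
    have hv₁ : ((A - μ • (1 : V →L[ℝ] V)) ^ n) (Polynomial.aeval A (b * q) v) = 0 := by
      rw [← aeval_x_sub_c_pow, ← ContinuousLinearMap.mul_apply, ← map_mul,
        show p * (b * q) = b * (p * q) by ring, map_mul,
        ContinuousLinearMap.mul_apply, h, map_zero]
    have hv₂ : Polynomial.aeval A q (Polynomial.aeval A (a * p) v) = 0 := by
      rw [← ContinuousLinearMap.mul_apply, ← map_mul,
        show q * (a * p) = a * (p * q) by ring, map_mul,
        ContinuousLinearMap.mul_apply, h, map_zero]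
    obtain ⟨c, hcs, hck, hcsum⟩ := ih _ hv₂
    refine ⟨c + Finsupp.single μ (Polynomial.aeval A (b * q) v), ?_, ?_, ?_⟩
    · refine (Finset.coe_subset.2 Finsupp.support_add).trans ?_
      push_cast
      apply Set.union_subset
      · exact hcs.trans (by intro x hx; exact Set.mem_insert_of_mem _ hx)
      · exact (Finset.coe_subset.2 Finsupp.support_single_subset).trans (by simp)
    · intro ν
      rcases eq_or_ne ν μ with rfl | hne
      · have hcν : c ν = 0 := by
          by_contra hc
          exact hμs (by exact_mod_cast hcs (Finsupp.mem_support_iff.2 hc))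
        simp only [Finsupp.add_apply, Finsupp.single_eq_same, hcν, zero_add]
        exact hv₁
      · simp only [Finsupp.add_apply, Finsupp.single_eq_of_ne' (Ne.symm hne), add_zero]
        exact hck ν
    · rw [Finsupp.sum_add_index' (fun _ => rfl) (fun _ _ _ => rfl), hcsum,
        Finsupp.sum_single_index rfl]
      rw [add_comm]; exact hv.symm

set_option synthInstance.maxHeartbeats 1000000 in
private lemma exp_apply_eq [CompleteSpace V] (A : V →L[ℝ] V) (μ : ℝ) (n : ℕ) (x : V)
    (hx : ((A - μ • (1 : V →L[ℝ] V)) ^ n) x = 0) (t : ℝ) :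
    NormedSpace.exp (t • A) x =
      Real.exp (μ * t) •
        ∑ k ∈ Finset.range n, (t ^ k * ((k ! : ℝ))⁻¹) • ((A - μ • (1 : V →L[ℝ] V)) ^ k) x := by
  set N : V →L[ℝ] V := A - μ • 1 with hN
  have hsplit : t • A = algebraMap ℝ (V →L[ℝ] V) (t * μ) + t • N := by
    rw [Algebra.algebraMap_eq_smul_one, hN, smul_sub, smul_smul]
    abel
  have hcomm : Commute (algebraMap ℝ (V →L[ℝ] V) (t * μ)) (t • N) :=
    Algebra.commutes _ _
  have h1 : NormedSpace.exp (algebraMap ℝ (V →L[ℝ] V) (t * μ)) =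
      Real.exp (t * μ) • (1 : V →L[ℝ] V) := by
    rw [← NormedSpace.algebraMap_exp_comm, Real.exp_eq_exp_ℝ,
      Algebra.algebraMap_eq_smul_one]
  have h2 : NormedSpace.exp (t • N) x =
      ∑ k ∈ Finset.range n, (t ^ k * ((k ! : ℝ))⁻¹) • (N ^ k) x := by
    have hsum : Summable fun k : ℕ => ((k ! : ℝ))⁻¹ • (t • N) ^ k :=
      NormedSpace.expSeries_summable' (𝕂 := ℝ) (t • N)
    have happ : NormedSpace.exp (t • N) x =
        ∑' k : ℕ, (((k ! : ℝ))⁻¹ • (t • N) ^ k) x := by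
      rw [NormedSpace.exp_eq_tsum (𝕂 := ℝ)]
      exact ((ContinuousLinearMap.apply ℝ V x).map_tsum hsum)
    rw [happ]
    have hterm : ∀ k : ℕ,
        (((k ! : ℝ))⁻¹ • (t • N) ^ k) x = (t ^ k * ((k ! : ℝ))⁻¹) • (N ^ k) x := by
      intro k
      rw [ContinuousLinearMap.smul_apply, _root_.smul_pow, ContinuousLinearMap.smul_apply,
        smul_smul, mul_comm]
    have hzero : ∀ k ∉ Finset.range n, (((k ! : ℝ))⁻¹ • (t • N) ^ k) x = 0 := by
      intro k hk
      rw [hterm k]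
      have hkn : n ≤ k := by simpa using hk
      have : (N ^ k) x = 0 := by
        rw [show k = (k - n) + n by omega, pow_add, ContinuousLinearMap.mul_apply, hx, map_zero]
      rw [this, smul_zero]
    rw [tsum_eq_sum hzero]
    exact Finset.sum_congr rfl fun k _ => hterm k
  rw [hsplit, (show NormedSpace.exp (algebraMap ℝ (V →L[ℝ] V) (t * μ) + t • N) = NormedSpace.exp (algebraMap ℝ (V →L[ℝ] V) (t * μ)) * NormedSpace.exp (t • N) by let +nondep : NormedAlgebra ℚ (V →L[ℝ] V) := .restrictScalars ℚ ℝ _; exact NormedSpace.exp_add_of_commute hcomm), h1, ContinuousLinearMap.mul_apply,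
    ContinuousLinearMap.smul_apply, ContinuousLinearMap.one_apply, mul_comm μ t, ← h2]

private lemma charpoly_eq_prod [FiniteDimensional ℝ V] (A : V →L[ℝ] V)
    (hreal : ∀ z : ℂ,
      z ∈ ((LinearMap.charpoly (A : V →ₗ[ℝ] V)).map (algebraMap ℝ ℂ)).roots → z.im = 0) :
    LinearMap.charpoly (A : V →ₗ[ℝ] V) =
      (Multiset.map (fun μ : ℝ => X - C μ)
        (((LinearMap.charpoly (A : V →ₗ[ℝ] V)).map (algebraMap ℝ ℂ)).roots.map
          Complex.re)).prod := by
  set ch := LinearMap.charpoly (A : V →ₗ[ℝ] V) with hch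
  set fc := algebraMap ℝ ℂ
  set chc := ch.map fc with hchc
  have hm : chc.Monic := (LinearMap.charpoly_monic _).map _
  have hfac : chc = (chc.roots.map fun z => X - C z).prod :=
    (IsAlgClosed.splits chc).eq_prod_roots_of_monic hm
  apply Polynomial.map_injective fc (algebraMap ℝ ℂ).injective
  rw [← hchc]
  have hmap : ((Multiset.map (fun μ : ℝ => X - C μ) (chc.roots.map Complex.re)).prod).map fc
      = (Multiset.map (fun z : ℂ => X - C ((z.re : ℝ) : ℂ)) chc.roots).prod := by
    rw [Polynomial.map_multiset_prod, Multiset.map_map, Multiset.map_map]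
    congr 1
    apply Multiset.map_congr rfl
    intro z _
    show Polynomial.map fc (X - C z.re) = X - C ((z.re : ℝ) : ℂ)
    rw [Polynomial.map_sub, Polynomial.map_X, Polynomial.map_C]
    norm_num [congrFun Complex.coe_algebraMap z.re]
    exact congrFun Complex.coe_algebraMap z.re
  rw [hmap]
  have : Multiset.map (fun z : ℂ => X - C ((z.re : ℝ) : ℂ)) chc.roots
      = Multiset.map (fun z : ℂ => X - C z) chc.roots := by
    apply Multiset.map_congr rfl
    intro z hz
    have : ((z.re : ℝ) : ℂ) = z := Complex.ext (Complex.ofReal_re _)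
      (by rw [Complex.ofReal_im]; exact (hreal z hz).symm)
    rw [this]
  rw [this, ← hfac]

private lemma aeval_prod_eq_zero [FiniteDimensional ℝ V] (A : V →L[ℝ] V)
    (hreal : ∀ z : ℂ,
      z ∈ ((LinearMap.charpoly (A : V →ₗ[ℝ] V)).map (algebraMap ℝ ℂ)).roots → z.im = 0)
    (v : V) :
    Polynomial.aeval A
      (∏ μ ∈ (((LinearMap.charpoly (A : V →ₗ[ℝ] V)).map (algebraMap ℝ ℂ)).roots.map
          Complex.re).toFinset,
        (X - C μ) ^
          (Multiset.card (((LinearMap.charpoly (A : V →ₗ[ℝ] V)).map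
            (algebraMap ℝ ℂ)).roots.map Complex.re) + 1)) v = 0 := by
  classical
  set ch := LinearMap.charpoly (A : V →ₗ[ℝ] V) with hch
  set m : Multiset ℝ := ((ch.map (algebraMap ℝ ℂ)).roots.map Complex.re) with hm
  set n : ℕ := Multiset.card m + 1 with hn
  have hdvd : ch ∣ ∏ μ ∈ m.toFinset, (X - C μ) ^ n := by
    conv_lhs => rw [hch, charpoly_eq_prod A hreal]
    rw [show (Multiset.map Complex.re ((Polynomial.map (algebraMap ℝ ℂ) ((A : V →ₗ[ℝ] V)).charpoly).roots)) = m from rfl, Finset.prod_multiset_map_count]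
    apply Finset.prod_dvd_prod_of_dvd
    intro μ _
    exact pow_dvd_pow _ (le_trans (Multiset.count_le_card μ m) (by omega))
  obtain ⟨r, hr⟩ := hdvd
  rw [hr, map_mul, ContinuousLinearMap.mul_apply, aeval_charpoly_clm]

end Aux

open Nat in
set_option maxHeartbeats 1000000 in
theorem stmt_12 (V : Type*) [NormedAddCommGroup V] [NormedSpace ℝ V]
    [FiniteDimensional ℝ V] (A : V →L[ℝ] V)
    (hreal : ∀ z : ℂ,
      z ∈ ((LinearMap.charpoly (A : V →ₗ[ℝ] V)).map (algebraMap ℝ ℂ)).roots → z.im = 0)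
    (v : V) (hv : ‖v‖ = 1) :
    ∃ w : V, ‖w‖ = 1 ∧
      Tendsto (fun t : ℝ => ‖NormedSpace.exp (t • A) v‖⁻¹ • NormedSpace.exp (t • A) v)
        atTop (nhds w) ∧
      ∀ t : ℝ, ‖NormedSpace.exp (t • A) w‖⁻¹ • NormedSpace.exp (t • A) w = w := by
  classical
  obtain ⟨n, hn1, c, hck, hcsum⟩ : ∃ n : ℕ, 1 ≤ n ∧ ∃ c : ℝ →₀ V,
      (∀ μ : ℝ, ((A - μ • (1 : V →L[ℝ] V)) ^ n) (c μ) = 0) ∧ c.sum (fun _ x => x) = v := by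
    obtain ⟨c, -, hck, hcsum⟩ := decomp_aux A _ _ v (aeval_prod_eq_zero A hreal v)
    exact ⟨_, by omega, c, hck, hcsum⟩
  set N : ℝ → V →L[ℝ] V := fun i => A - i • 1 with hN
  -- basic exp expansion
  have hF : ∀ t : ℝ, NormedSpace.exp (t • A) v =
      ∑ i ∈ c.support, Real.exp (i * t) •
        ∑ k ∈ Finset.range n, (t ^ k * ((k ! : ℝ))⁻¹) • ((N i) ^ k) (c i) := by
    intro t
    conv_lhs => rw [← hcsum]
    rw [Finsupp.sum, map_sum]
    exact Finset.sum_congr rfl fun i _ => exp_apply_eq A i n (c i) (hck i) t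
  have hvne : v ≠ 0 := by intro h; rw [h, norm_zero] at hv; norm_num at hv
  have hsupp : c.support.Nonempty := by
    rcases Finset.eq_empty_or_nonempty c.support with he | hne
    · exact absurd (by rw [← hcsum, Finsupp.support_eq_empty.mp he]; simp) hvne
    · exact hne
  set istar : ℝ := c.support.max' hsupp with histar
  have hcistar : c istar ≠ 0 := Finsupp.mem_support_iff.mp (Finset.max'_mem _ _)
  set filt : Finset ℕ := (Finset.range n).filter (fun k => ((N istar) ^ k) (c istar) ≠ 0)
    with hfilt
  have hfne : filt.Nonempty := by
    refine ⟨0, Finset.mem_filter.mpr ⟨Finset.mem_range.mpr (by omega), ?_⟩⟩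
    simpa using hcistar
  set kstar : ℕ := filt.max' hfne with hkstar
  have hkmem := Finset.max'_mem filt hfne
  have hkn : kstar ∈ Finset.range n := (Finset.mem_filter.mp hkmem).1
  have hNk : ((N istar) ^ kstar) (c istar) ≠ 0 := (Finset.mem_filter.mp hkmem).2
  have hwzero : ∀ k : ℕ, kstar < k → ((N istar) ^ k) (c istar) = 0 := by
    intro k hk
    by_cases hkr : k ∈ Finset.range n
    · by_contra h
      exact absurd (Finset.le_max' filt k (Finset.mem_filter.mpr ⟨hkr, h⟩)) (not_le.mpr hk)
    · have hnk : n ≤ k := by simpa using hkr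
      rw [show k = (k - n) + n by omega, pow_add, ContinuousLinearMap.mul_apply, hck istar,
        map_zero]
  set wf : ℝ → ℕ → V := fun i k => ((k ! : ℝ))⁻¹ • ((N i) ^ k) (c i) with hwf
  set W : V := wf istar kstar with hWdef
  have hWne : W ≠ 0 := by
    rw [hWdef, hwf]
    exact smul_ne_zero (inv_ne_zero (by exact_mod_cast (Nat.factorial_ne_zero kstar))) hNk
  set co : ℝ → ℕ → ℝ → ℝ :=
    fun i k t => Real.exp ((i - istar) * t) * (t ^ k / t ^ kstar) with hco
  set g : ℝ → V := fun t => ∑ i ∈ c.support, ∑ k ∈ Finset.range n, co i k t • wf i k with hg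
  -- relation between exp and g
  have hag : ∀ t : ℝ, 0 < t →
      NormedSpace.exp (t • A) v = (Real.exp (istar * t) * t ^ kstar) • g t := by
    intro t ht
    rw [hF t, hg, Finset.smul_sum]
    refine Finset.sum_congr rfl fun i _ => ?_
    rw [Finset.smul_sum, Finset.smul_sum]
    refine Finset.sum_congr rfl fun k _ => ?_
    rw [hwf, hco, smul_smul, smul_smul, smul_smul]
    congr 1
    have hexp : Real.exp (istar * t) * Real.exp ((i - istar) * t) = Real.exp (i * t) := by
      rw [← Real.exp_add]; ring_nf
    have htk : (t : ℝ) ^ kstar ≠ 0 := pow_ne_zero _ (ne_of_gt ht)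
    field_simp
    rw [← hexp]
    ring
  -- convergence of g to W
  have hgW : Tendsto g atTop (nhds W) := by
    have hLsum : ∑ i ∈ c.support, ∑ k ∈ Finset.range n,
        (if i = istar ∧ k = kstar then W else 0) = W := by
      rw [Finset.sum_eq_single istar]
      · rw [Finset.sum_eq_single kstar]
        · simp
        · intro k _ hkne; simp [hkne]
        · intro h; exact absurd hkn h
      · intro i _ hine; exact Finset.sum_eq_zero fun k _ => by simp [hine]
      · intro h; exact absurd (Finset.max'_mem _ hsupp) h
    rw [hg, ← hLsum]
    refine tendsto_finset_sum _ fun i hi => tendsto_finset_sum _ fun k hk => ?_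
    by_cases hik : i = istar ∧ k = kstar
    · obtain ⟨rfl, rfl⟩ := hik
      simp only [if_pos (⟨rfl, rfl⟩ : istar = istar ∧ kstar = kstar)]
      have hco1 : Tendsto (fun t => co istar kstar t) atTop (nhds 1) := by
        have heq : ∀ᶠ t in atTop, (1 : ℝ) = co istar kstar t := by
          filter_upwards [eventually_gt_atTop 0] with t ht
          rw [hco]
          simp [sub_self, Real.exp_zero, div_self (pow_ne_zero kstar (ne_of_gt ht))]
        exact Tendsto.congr' heq tendsto_const_nhds
      simpa using hco1.smul_const (wf istar kstar)
    · rw [if_neg hik]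
      by_cases hw0 : wf i k = 0
      · simp only [hw0, smul_zero]; exact tendsto_const_nhds
      rcases eq_or_ne i istar with rfl | hine
      · -- k ≠ kstar; if kstar < k then wf = 0, contradiction; so k < kstar
        have hkne : k ≠ kstar := fun e => hik ⟨rfl, e⟩
        have hklt : k < kstar := by
          rcases lt_or_gt_of_ne hkne with h | h
          · exact h
          · exact absurd (by simp only [hwf]; rw [hwzero k h, smul_zero]) hw0
        have hco0 : Tendsto (fun t => co istar k t) atTop (nhds 0) := by
          have h0 : Tendsto (fun t : ℝ => (t ^ (kstar - k))⁻¹) atTop (nhds 0) :=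
            (tendsto_pow_atTop (by omega : kstar - k ≠ 0)).inv_tendsto_atTop
          refine h0.congr' ?_
          filter_upwards [eventually_gt_atTop 0] with t ht
          rw [hco]
          simp only [sub_self, zero_mul, Real.exp_zero, one_mul]
          rw [show kstar = k + (kstar - k) by omega, pow_add]
          field_simp
          rw [Nat.add_sub_cancel_left]
        simpa using hco0.smul_const (wf istar k)
      · -- i < istar
        have hile : i ≤ istar := Finset.le_max' _ i hi
        have hilt : i < istar := lt_of_le_of_ne hile hine
        set b : ℝ := istar - i with hb
        have hbpos : 0 < b := by rw [hb]; linarith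
        have hmain : Tendsto (fun t : ℝ => t ^ k * Real.exp (-(b * t))) atTop (nhds 0) := by
          have hcomp : Tendsto (fun t : ℝ => (b * t) ^ k * Real.exp (-(b * t)))
              atTop (nhds 0) :=
            (Real.tendsto_pow_mul_exp_neg_atTop_nhds_zero k).comp
              (tendsto_id.const_mul_atTop hbpos)
          have := hcomp.const_mul ((b⁻¹) ^ k)
          rw [mul_zero] at this
          refine this.congr fun t => ?_
          rw [← mul_assoc, ← mul_pow, inv_mul_cancel_left₀ (ne_of_gt hbpos)]
        refine squeeze_zero_norm' ?_ (by simpa using hmain.mul_const ‖wf i k‖)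
        filter_upwards [eventually_ge_atTop 1] with t ht
        have ht0 : (0 : ℝ) < t := lt_of_lt_of_le zero_lt_one ht
        rw [norm_smul, Real.norm_eq_abs]
        have hcoeq : co i k t = Real.exp (-(b * t)) * (t ^ k / t ^ kstar) := by
          rw [hco, hb]; ring_nf
        have hco_nonneg : 0 ≤ co i k t := by
          rw [hcoeq]; positivity
        rw [abs_of_nonneg hco_nonneg, hcoeq]
        have hdivle : t ^ k / t ^ kstar ≤ t ^ k :=
          div_le_self (pow_nonneg ht0.le k) (one_le_pow₀ ht)
        have : Real.exp (-(b * t)) * (t ^ k / t ^ kstar) ≤ t ^ k * Real.exp (-(b * t)) := by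
          rw [mul_comm]
          exact mul_le_mul_of_nonneg_right hdivle (Real.exp_nonneg _)
        exact mul_le_mul_of_nonneg_right this (norm_nonneg _)
  -- the limit point
  have hWnorm : ‖W‖ ≠ 0 := fun h => hWne (norm_eq_zero.mp h)
  refine ⟨‖W‖⁻¹ • W, ?_, ?_, ?_⟩
  · rw [norm_smul, norm_inv, norm_norm, inv_mul_cancel₀ hWnorm]
  · have hTg : Tendsto (fun t => ‖g t‖⁻¹ • g t) atTop (nhds (‖W‖⁻¹ • W)) :=
      Tendsto.smul ((hgW.norm).inv₀ hWnorm) hgW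
    refine hTg.congr' ?_
    filter_upwards [eventually_gt_atTop 0] with t ht
    rw [hag t ht]
    set a : ℝ := Real.exp (istar * t) * t ^ kstar with ha
    have hapos : 0 < a := by rw [ha]; positivity
    rw [norm_smul, Real.norm_eq_abs, abs_of_pos hapos, smul_smul, mul_inv,
      mul_comm a⁻¹ ‖g t‖⁻¹, mul_assoc, inv_mul_cancel₀ (ne_of_gt hapos), mul_one]
  · -- fixed point
    have hNW : (N istar) W = 0 := by
      rw [hWdef, hwf, map_smul]
      have : (N istar) (((N istar) ^ kstar) (c istar)) = ((N istar) ^ (kstar + 1)) (c istar) := by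
        rw [_root_.pow_succ', ContinuousLinearMap.mul_apply]
      rw [this, hwzero (kstar + 1) (by omega), smul_zero]
    have hx1 : (((N istar)) ^ 1) (‖W‖⁻¹ • W) = 0 := by
      rw [pow_one, map_smul, hNW, smul_zero]
    have hwn1 : ‖‖W‖⁻¹ • W‖ = 1 := by
      rw [norm_smul, norm_inv, norm_norm, inv_mul_cancel₀ hWnorm]
    intro t
    have := exp_apply_eq A istar 1 (‖W‖⁻¹ • W) hx1 t
    rw [Finset.sum_range_one] at this
    simp only [pow_zero, Nat.factorial_zero, Nat.cast_one, inv_one, mul_one, one_smul,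
      ContinuousLinearMap.one_apply] at this
    rw [this]
    rw [norm_smul, Real.norm_eq_abs, abs_of_pos (Real.exp_pos _), hwn1, mul_one, smul_smul,
      inv_mul_cancel₀ (ne_of_gt (Real.exp_pos _)), one_smul]
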